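/- Let σ ≥ 0, ε ∈ (0, 1), and b ∈ ℝ with b > √((1 − ε)/ε) · σ. Then every probability measure μ on ℝ with mean zero (∫ x dμ(x) = 0) and second moment σ² (∫ x² dμ(x) = σ²) satisfies μ({x ∈ ℝ : b + x > 0}) ≥ 1 − ε. -/

import Mathlib

open MeasureTheory

theorem distributionally_robust_chance_constraint {σ : ℝ} (hσ : 0 ≤ σ)
    {ε : ℝ} (hε : ε ∈ Set.Ioo (0 : ℝ) 1) (b : ℝ)
    (hb : Real.sqrt ((1 - ε) / ε) * σ < b)
    (μ : Measure ℝ) [IsProbabilityMeasure μ]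
    (hint1 : Integrable (fun x : ℝ => x) μ)
    (hint2 : Integrable (fun x : ℝ => x ^ 2) μ)
    (hmean : ∫ x, x ∂μ = 0) (hvar : ∫ x, x ^ 2 ∂μ = σ ^ 2) :
    ENNReal.ofReal (1 - ε) ≤ μ {x : ℝ | 0 < b + x} := by
  obtain ⟨hε0, hε1⟩ := hε
  have hs : 0 ≤ Real.sqrt ((1 - ε) / ε) * σ := mul_nonneg (Real.sqrt_nonneg _) hσ
  have hb0 : 0 < b := lt_of_le_of_lt hs hb
  have hb2 : (1 - ε) / ε * σ ^ 2 < b ^ 2 := by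
    have := mul_self_lt_mul_self hs hb
    have hsq : Real.sqrt ((1 - ε) / ε) ^ 2 = (1 - ε) / ε :=
      Real.sq_sqrt (div_nonneg (by linarith) hε0.le)
    nlinarith
  -- key real inequality: (1-ε) σ² < ε b²
  have hkey : (1 - ε) * σ ^ 2 < ε * b ^ 2 := by
    rw [div_mul_eq_mul_div, div_lt_iff₀ hε0] at hb2; linarith
  set t : ℝ := σ ^ 2 / b with ht
  have ht0 : 0 ≤ t := by positivity
  set c : ℝ := b + t with hc
  have hc0 : 0 < c := by positivity
  -- f x = (t - x)^2
  have hfint : Integrable (fun x : ℝ => (t - x) ^ 2) μ := by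
    have : (fun x : ℝ => (t - x) ^ 2)
        = fun x : ℝ => t ^ 2 - (2 * t) * x + x ^ 2 := by
      funext x; ring
    rw [this]
    exact ((integrable_const (t ^ 2)).sub (hint1.const_mul _)).add hint2
  have hfval : ∫ x, (t - x) ^ 2 ∂μ = t ^ 2 + σ ^ 2 := by
    calc ∫ x, (t - x) ^ 2 ∂μ
        = ∫ x, (t ^ 2 - (2 * t) * x + x ^ 2) ∂μ := by congr 1; funext x; ring
      _ = (∫ x, (t ^ 2 - (2 * t) * x) ∂μ) + ∫ x, x ^ 2 ∂μ :=
          integral_add ((integrable_const _).sub (hint1.const_mul _)) hint2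
      _ = ((∫ _, (t ^ 2 : ℝ) ∂μ) - ∫ x, (2 * t) * x ∂μ) + ∫ x, x ^ 2 ∂μ := by
          rw [integral_sub (integrable_const _) (hint1.const_mul _)]
      _ = t ^ 2 + σ ^ 2 := by
          rw [integral_const_mul, hmean, hvar]; simp
  have hmarkov := mul_meas_ge_le_integral_of_nonneg
    (μ := μ) (f := fun x : ℝ => (t - x) ^ 2)
    (Filter.Eventually.of_forall fun x => sq_nonneg _) hfint (c ^ 2)
  rw [hfval] at hmarkov
  -- complement set
  have hset : {x : ℝ | 0 < b + x}ᶜ ⊆ {x : ℝ | c ^ 2 ≤ (t - x) ^ 2} := by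
    intro x hx
    simp only [Set.mem_compl_iff, Set.mem_setOf_eq, not_lt] at hx ⊢
    have h1 : c ≤ t - x := by linarith
    nlinarith
  have hmeas : MeasurableSet {x : ℝ | 0 < b + x} :=
    measurableSet_lt measurable_const (measurable_const.add measurable_id)
  have hcompl_le : μ {x : ℝ | 0 < b + x}ᶜ ≤ μ {x : ℝ | c ^ 2 ≤ (t - x) ^ 2} :=
    measure_mono hset
  set A := μ {x : ℝ | c ^ 2 ≤ (t - x) ^ 2}
  have hAne : A ≠ ⊤ := measure_ne_top _ _
  have hAle : A.toReal ≤ ε := by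
    have h1 : c ^ 2 * A.toReal ≤ t ^ 2 + σ ^ 2 := hmarkov
    have h2 : t ^ 2 + σ ^ 2 ≤ ε * c ^ 2 := by
      have hb' : b ≠ 0 := ne_of_gt hb0
      have : t = σ ^ 2 / b := ht
      field_simp [hc, ht]
      have e1 : t ^ 2 + σ ^ 2 = σ ^ 2 * (σ ^ 2 + b ^ 2) / b ^ 2 := by
        rw [ht]; field_simp <;> ring
      have e2 : ε * c ^ 2 = ε * (σ ^ 2 + b ^ 2) ^ 2 / b ^ 2 := by
        rw [hc, ht]; field_simp <;> ring
      rw [e1, e2, div_le_div_iff_of_pos_right (by positivity)]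
      nlinarith [mul_lt_mul_of_pos_right hkey (show (0:ℝ) < σ ^ 2 + b ^ 2 by positivity),
        mul_pos hb0 hb0, sq_nonneg σ, sq_nonneg b]
    have hc2 : 0 < c ^ 2 := by positivity
    rw [mul_comm] at h1
    calc A.toReal ≤ (t ^ 2 + σ ^ 2) / c ^ 2 := by
          rw [le_div_iff₀ hc2]; linarith
      _ ≤ ε := by rw [div_le_iff₀ hc2]; linarith
  have hcompl : μ {x : ℝ | 0 < b + x}ᶜ ≤ ENNReal.ofReal ε := by
    refine hcompl_le.trans ?_
    rw [← ENNReal.ofReal_toReal hAne]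
    exact ENNReal.ofReal_le_ofReal hAle
  have h1 : μ {x : ℝ | 0 < b + x} = 1 - μ {x : ℝ | 0 < b + x}ᶜ := by
    rw [measure_compl hmeas (measure_ne_top _ _), measure_univ]
    rw [ENNReal.sub_sub_cancel (by simp) (prob_le_one)]
  rw [h1]
  calc ENNReal.ofReal (1 - ε) = 1 - ENNReal.ofReal ε := by
        rw [ENNReal.ofReal_sub _ hε0.le]; simp
    _ ≤ 1 - μ {x : ℝ | 0 < b + x}ᶜ := by
        exact tsub_le_tsub_left hcompl 1
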